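/- Define the ramp function R(x) = max(x, 0) and the clamp function C(x; a, b) = min(max(x, a), b) for a ≤ b. Let A be symmetric positive definite, b ∈ ℝⁿ nonzero, c ∈ ℝ, kₓ, k_y > 0, c̃ = c/(bᵀA⁻¹b), k̃ₓ = kₓ/(kₓ+k_y). Then the unique minimizer of kₓ·xᵀAx + k_y·|y| subject to y ≥ xᵀAx − 2bᵀx + c is x* = (1 − √(C(1 − c̃; k̃ₓ², 1)))·A⁻¹b and y* = R(c − (1 − k̃ₓ²)·bᵀA⁻¹b). -/

import Mathlib

open Matrix

/-- Ramp function R(x) = max(x,0). -/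
noncomputable def ramp (x : ℝ) : ℝ := max x 0

/-- Clamp function C(x;a,b) = min(max(x,a),b). -/
noncomputable def clamp (x a b : ℝ) : ℝ := min (max x a) b

lemma ramp_nonneg (x : ℝ) : 0 ≤ ramp x := le_max_right _ _
lemma le_ramp (x : ℝ) : x ≤ ramp x := le_max_left _ _
lemma ramp_of_nonneg {x : ℝ} (h : 0 ≤ x) : ramp x = x := max_eq_left h
lemma ramp_of_nonpos {x : ℝ} (h : x ≤ 0) : ramp x = 0 := max_eq_right h
lemma ramp_mono {x y : ℝ} (h : x ≤ y) : ramp x ≤ ramp y := max_le_max h le_rfl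

lemma core (K L s t : ℝ) (hK : 0 < K) (hL : 0 < L)
    (h : t ≠ 1 - Real.sqrt (clamp s ((K/(K+L))^2) 1)) :
    K*(1 - Real.sqrt (clamp s ((K/(K+L))^2) 1))^2
      + L*ramp ((1 - Real.sqrt (clamp s ((K/(K+L))^2) 1) - 1)^2 - s)
    < K*t^2 + L*ramp ((t-1)^2 - s) := by
  have hKL : 0 < K + L := by linarith
  set k := K/(K+L) with hk
  have hk0 : 0 < k := div_pos hK hKL
  have hk1 : k < 1 := by rw [hk, div_lt_one hKL]; linarith
  have hkK : k * (K+L) = K := div_mul_cancel₀ _ hKL.ne'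
  rcases le_or_gt 1 s with hs1 | hs1
  · -- clamp = 1, ts = 0
    have hc : clamp s (k^2) 1 = 1 := by
      unfold clamp
      exact min_eq_right (le_max_of_le_left hs1)
    rw [hc, Real.sqrt_one] at h ⊢
    have ht : t ≠ 0 := by simpa using h
    have h1 : ramp ((1 - 1 - 1)^2 - s) = 0 := ramp_of_nonpos (by nlinarith)
    have h2 : 0 ≤ ramp ((t-1)^2 - s) := ramp_nonneg _
    have h3 : 0 < t^2 := lt_of_le_of_ne (sq_nonneg t) (Ne.symm (pow_ne_zero 2 ht))
    rw [h1]
    nlinarith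
  rcases le_or_gt s (k^2) with hs2 | hs2
  · -- clamp = k^2, ts = 1 - k
    have hc : clamp s (k^2) 1 = k^2 := by
      unfold clamp
      rw [max_eq_right hs2]
      exact min_eq_left (by nlinarith)
    rw [hc, Real.sqrt_sq hk0.le] at h ⊢
    have hne : t - (1 - k) ≠ 0 := sub_ne_zero.2 h
    have hpos : 0 < (t - (1-k))^2 := lt_of_le_of_ne (sq_nonneg _) (Ne.symm (pow_ne_zero 2 hne))
    have h1 : ramp ((1 - k - 1)^2 - s) = k^2 - s := by
      rw [ramp_of_nonneg (by nlinarith)]; ring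
    have h2 : (t-1)^2 - s ≤ ramp ((t-1)^2 - s) := le_ramp _
    rw [h1]
    nlinarith [mul_pos hKL hpos]
  · -- clamp = s, ts = 1 - √s
    have hs0 : 0 ≤ s := le_trans (by positivity) hs2.le
    have hc : clamp s (k^2) 1 = s := by
      unfold clamp
      rw [max_eq_left hs2.le]
      exact min_eq_left hs1.le
    rw [hc] at h ⊢
    set r := Real.sqrt s with hrdef
    have hr0 : 0 ≤ r := Real.sqrt_nonneg s
    have hr2 : r^2 = s := Real.sq_sqrt hs0
    have hr1 : r ≤ 1 := by
      rw [hrdef]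
      calc Real.sqrt s ≤ Real.sqrt 1 := Real.sqrt_le_sqrt hs1.le
        _ = 1 := Real.sqrt_one
    have hrk : k ≤ r := by
      rw [hrdef]
      calc k = Real.sqrt (k^2) := (Real.sqrt_sq hk0.le).symm
        _ ≤ Real.sqrt s := Real.sqrt_le_sqrt hs2.le
    have h1 : ramp ((1 - r - 1)^2 - s) = 0 := ramp_of_nonpos (by nlinarith)
    rw [h1]
    rcases le_or_gt ((t-1)^2) s with h2 | h2
    · -- inner region, ramp = 0
      have h3 : ramp ((t-1)^2 - s) = 0 := ramp_of_nonpos (by linarith)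
      rw [h3]
      have h4 : 1 - r ≤ t := by nlinarith
      have h5 : 1 - r < t := lt_of_le_of_ne h4 (fun e => h e.symm)
      nlinarith [mul_pos (sub_pos.2 h5) (show (0:ℝ) < t + 1 - r by linarith)]
    · -- outer region
      have h3 : ramp ((t-1)^2 - s) = (t-1)^2 - s := ramp_of_nonneg (by linarith)
      rw [h3]
      rcases le_or_gt t (1 - r) with h4 | h4
      · have h5 : t < 1 - r := lt_of_le_of_ne h4 h
        have hd : 0 < 1 - r - t := by linarith
        have hbr : 0 < L*(1+r-t) - K*(t+1-r) := by
          nlinarith [mul_pos hKL hd, mul_le_mul_of_nonneg_right hrk hKL.le]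
        nlinarith [mul_pos hd hbr]
      · have habs : r < |t-1| := by
          have h7 : r^2 < |t-1|^2 := by rw [sq_abs]; linarith
          exact lt_of_pow_lt_pow_left₀ 2 (abs_nonneg _) h7
        have h6 : 1 + r < t := by
          rcases abs_cases (t-1) with ⟨he, _⟩ | ⟨he, hneg⟩
          · rw [he] at habs; linarith
          · rw [he] at habs; linarith
        nlinarith [mul_pos (show (0:ℝ) < t - (1-r) by linarith) (show (0:ℝ) < t + (1-r) by linarith), mul_pos hL (show (0:ℝ) < (t-1)^2 - s by linarith)]

lemma ramp_abs_le {u y : ℝ} (hy : u ≤ y) : ramp u ≤ |y| := by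
  rcases le_or_gt u 0 with h | h
  · rw [ramp_of_nonpos h]; exact abs_nonneg y
  · rw [ramp_of_nonneg h.le, abs_of_pos (lt_of_lt_of_le h hy)]; exact hy

lemma ramp_abs_lt {u y : ℝ} (hy : u ≤ y) (hne : y ≠ ramp u) : ramp u < |y| := by
  rcases le_or_gt u 0 with h | h
  · rw [ramp_of_nonpos h] at hne ⊢
    exact abs_pos.2 hne
  · rw [ramp_of_nonneg h.le] at hne ⊢
    rw [abs_of_pos (lt_of_lt_of_le h hy)]
    exact lt_of_le_of_ne hy (Ne.symm hne)

lemma ramp_mul {β x : ℝ} (hβ : 0 ≤ β) : ramp (β * x) = β * ramp x := by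
  rcases le_or_gt x 0 with h | h
  · rw [ramp_of_nonpos h, ramp_of_nonpos (by nlinarith), mul_zero]
  · rw [ramp_of_nonneg h.le, ramp_of_nonneg (by positivity)]

lemma master (K L β c ts ys : ℝ) (hK : 0 < K) (hL : 0 < L) (hβ : 0 < β)
    (hts : ts = 1 - Real.sqrt (clamp (1 - c/β) ((K/(K+L))^2) 1))
    (hys : ys = ramp (c - (1 - (K/(K+L))^2)*β)) :
    (ts^2*β - 2*(ts*β) + c ≤ ys) ∧
    ∀ t q y, 0 ≤ q → (t^2*β + q) - 2*(t*β) + c ≤ y →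
      (t ≠ ts ∨ q ≠ 0 ∨ y ≠ ys) →
      K*(ts^2*β) + L*|ys| < K*(t^2*β + q) + L*|y| := by
  have hKL : 0 < K + L := by linarith
  set k := K/(K+L) with hk
  have hk0 : 0 < k := div_pos hK hKL
  have hk1 : k < 1 := by rw [hk, div_lt_one hKL]; linarith
  set s : ℝ := 1 - c/β with hs
  have hc : c = β*(1-s) := by
    rw [hs]; field_simp; ring
  -- g t = β*((t-1)^2 - s)
  have hg : ∀ t : ℝ, t^2*β - 2*(t*β) + c = β*((t-1)^2 - s) := by
    intro t; rw [hc]; ring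
  -- ys = ramp (g ts)
  have hys' : ys = ramp (β*((ts-1)^2 - s)) := by
    have harg : c - (1 - k^2)*β = β*(k^2 - s) := by rw [hc]; ring
    rw [hys, harg]
    rcases le_or_gt 1 s with hs1 | hs1
    · have hcl : clamp s (k^2) 1 = 1 := min_eq_right (le_max_of_le_left hs1)
      have hk2 : k^2 < 1 := pow_lt_one₀ hk0.le hk1 two_ne_zero
      rw [hts, hcl, Real.sqrt_one]
      rw [ramp_of_nonpos (mul_nonpos_of_nonneg_of_nonpos hβ.le (by nlinarith)),
        ramp_of_nonpos (mul_nonpos_of_nonneg_of_nonpos hβ.le (by nlinarith))]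
    rcases le_or_gt s (k^2) with hs2 | hs2
    · have hcl : clamp s (k^2) 1 = k^2 := by
        unfold clamp; rw [max_eq_right hs2]; exact min_eq_left (by nlinarith)
      rw [hts, hcl, Real.sqrt_sq hk0.le]
      norm_num
    · have hs0 : 0 ≤ s := le_trans (by positivity) hs2.le
      have hcl : clamp s (k^2) 1 = s := by
        unfold clamp; rw [max_eq_left hs2.le]; exact min_eq_left hs1.le
      rw [hts, hcl]
      have hr2 : Real.sqrt s ^ 2 = s := Real.sq_sqrt hs0
      rw [ramp_of_nonpos (mul_nonpos_of_nonneg_of_nonpos hβ.le (by nlinarith)),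
        ramp_of_nonpos (mul_nonpos_of_nonneg_of_nonpos hβ.le (by nlinarith))]
  constructor
  · rw [hg, hys']; exact le_ramp _
  intro t q y hq hy hne
  have hgy : β*((t-1)^2 - s) + q ≤ y := by rw [← hg]; linarith
  have h1 : ramp (β*((t-1)^2 - s) + q) ≤ |y| := ramp_abs_le hgy
  have h2 : ramp (β*((t-1)^2 - s)) ≤ ramp (β*((t-1)^2 - s) + q) := ramp_mono (by linarith)
  have hyseq : |ys| = ys := abs_of_nonneg (hys ▸ ramp_nonneg _)
  by_cases htts : t = ts
  · subst htts
    by_cases hq0 : q = 0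
    · subst hq0
      have hyne : y ≠ ys := by
        rcases hne with h | h | h
        · exact absurd rfl h
        · exact absurd rfl h
        · exact h
      have h1' : ramp (β*((t-1)^2 - s) + 0) < |y| := by
        refine ramp_abs_lt hgy ?_
        rw [add_zero, ← hys']
        exact hyne
      rw [add_zero] at h1'
      rw [hyseq, hys']
      nlinarith
    · have hq' : 0 < q := lt_of_le_of_ne hq (Ne.symm hq0)
      rw [hyseq, hys']
      nlinarith [mul_pos hK hq']
  · -- use core
    have hcore := core K L s t hK hL (by rw [← hts] at *; exact htts)
    rw [← hts] at hcore
    have hr1 : ramp ((ts-1)^2 - s) = ramp (β*((ts-1)^2 - s)) / β := by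
      rw [ramp_mul hβ.le]; field_simp
    have hr2 : ramp ((t-1)^2 - s) = ramp (β*((t-1)^2 - s)) / β := by
      rw [ramp_mul hβ.le]; field_simp
    rw [hr1, hr2] at hcore
    have hcore' : K*(ts^2*β) + L*ramp (β*((ts-1)^2 - s)) < K*(t^2*β) + L*ramp (β*((t-1)^2 - s)) := by
      have h' := mul_lt_mul_of_pos_right hcore hβ
      have e : ∀ a R : ℝ, (K*a + L*(R/β))*β = K*(a*β) + L*R := by
        intro a R; field_simp
      rwa [e, e] at h'
    rw [hyseq, hys']
    nlinarith [mul_nonneg hK.le hq]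

/-- The unique minimizer of kx·xᵀAx + ky·|y| subject to
y ≥ xᵀAx − 2bᵀx + c is x* = (1 − √(C(1 − c̃; k̃x², 1)))·A⁻¹b,
y* = R(c − (1 − k̃x²)·bᵀA⁻¹b). -/
theorem stmt6 {n : ℕ} (A : Matrix (Fin n) (Fin n) ℝ) (hA : A.PosDef)
    (b : Fin n → ℝ) (hb : b ≠ 0) (c : ℝ) (kx ky : ℝ) (hkx : 0 < kx) (hky : 0 < ky) :
    let ktx : ℝ := kx / (kx + ky)
    let ct : ℝ := c / (b ⬝ᵥ A⁻¹ *ᵥ b)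
    let xs : Fin n → ℝ := (1 - Real.sqrt (clamp (1 - ct) (ktx ^ 2) 1)) • (A⁻¹ *ᵥ b)
    let ys : ℝ := ramp (c - (1 - ktx ^ 2) * (b ⬝ᵥ A⁻¹ *ᵥ b))
    (ys ≥ xs ⬝ᵥ A *ᵥ xs - 2 * (b ⬝ᵥ xs) + c) ∧
    ∀ (x : Fin n → ℝ) (y : ℝ), y ≥ x ⬝ᵥ A *ᵥ x - 2 * (b ⬝ᵥ x) + c →
      (x, y) ≠ (xs, ys) →
      kx * (xs ⬝ᵥ A *ᵥ xs) + ky * |ys| < kx * (x ⬝ᵥ A *ᵥ x) + ky * |y| := by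
  intro ktx ct xs ys
  have hAinv : (A⁻¹).PosDef := hA.inv
  have hβ : 0 < b ⬝ᵥ A⁻¹ *ᵥ b := hAinv.re_dotProduct_pos hb
  set β := b ⬝ᵥ A⁻¹ *ᵥ b with hβdef
  set u := A⁻¹ *ᵥ b with hudef
  set ts := 1 - Real.sqrt (clamp (1 - ct) (ktx ^ 2) 1) with htsdef
  have hAu : A *ᵥ u = b := by
    rw [hudef, mulVec_mulVec, Matrix.mul_nonsing_inv _ (isUnit_iff_ne_zero.2 hA.det_pos.ne'), one_mulVec]
  have hAt : Aᵀ = A := by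
    have := hA.isHermitian.eq
    rwa [conjTranspose_eq_transpose_of_trivial] at this
  have hsymm : ∀ v w : Fin n → ℝ, v ⬝ᵥ A *ᵥ w = w ⬝ᵥ A *ᵥ v := by
    intro v w
    have h2 : v ᵥ* A = A *ᵥ v := by conv_lhs => rw [← hAt, vecMul_transpose]
    rw [dotProduct_mulVec, h2, dotProduct_comm]
  have hquad : ∀ (r : ℝ) (w : Fin n → ℝ),
      (r • u + w) ⬝ᵥ A *ᵥ (r • u + w) = r^2*β + 2*r*(b ⬝ᵥ w) + w ⬝ᵥ A *ᵥ w := by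
    intro r w
    have huAw : u ⬝ᵥ A *ᵥ w = b ⬝ᵥ w := by
      rw [hsymm u w, hAu, dotProduct_comm]
    have huAu : u ⬝ᵥ A *ᵥ u = β := by
      rw [hAu, dotProduct_comm]
    simp only [mulVec_add, mulVec_smul, dotProduct_add, add_dotProduct,
      dotProduct_smul, smul_dotProduct, smul_eq_mul]
    rw [huAw, huAu, show w ⬝ᵥ A *ᵥ u = b ⬝ᵥ w by rw [hAu, dotProduct_comm]]
    ring
  have hxs : xs = ts • u := rfl
  have hxsq : xs ⬝ᵥ A *ᵥ xs = ts^2*β := by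
    calc xs ⬝ᵥ A *ᵥ xs = (ts • u + 0) ⬝ᵥ A *ᵥ (ts • u + 0) := by rw [hxs, add_zero]
      _ = ts^2*β + 2*ts*(b ⬝ᵥ (0 : Fin n → ℝ)) + (0 : Fin n → ℝ) ⬝ᵥ A *ᵥ (0 : Fin n → ℝ) := hquad ts 0
      _ = ts^2*β := by simp
  have hbxs : b ⬝ᵥ xs = ts*β := by
    rw [hxs, dotProduct_smul, smul_eq_mul, ← hβdef]
  have hmaster := master kx ky β c ts ys hkx hky hβ rfl rfl
  constructor
  · rw [ge_iff_le, hxsq, hbxs]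
    exact hmaster.1
  · intro x y hy hne
    set t := (b ⬝ᵥ x)/β with htdef
    set w := x - t • u with hwdef
    have hxdecomp : t • u + w = x := by rw [hwdef]; abel
    have hbw : b ⬝ᵥ w = 0 := by
      rw [hwdef, dotProduct_sub, dotProduct_smul, smul_eq_mul, ← hβdef, htdef]
      field_simp; ring
    have hxq : x ⬝ᵥ A *ᵥ x = t^2*β + w ⬝ᵥ A *ᵥ w := by
      conv_lhs => rw [← hxdecomp]
      rw [hquad t w, hbw]
      ring
    have hbx : b ⬝ᵥ x = t*β := by rw [htdef]; field_simp
    set q := w ⬝ᵥ A *ᵥ w with hqdef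
    have hq0 : 0 ≤ q := by
      by_cases hw : w = 0
      · rw [hqdef, hw]; simp
      · exact (hA.re_dotProduct_pos hw).le
    have hy' : (t^2*β + q) - 2*(t*β) + c ≤ y := by
      rw [ge_iff_le, hxq, hbx] at hy
      linarith
    have hne' : t ≠ ts ∨ q ≠ 0 ∨ y ≠ ys := by
      by_contra hcon
      push_neg at hcon
      obtain ⟨h1, h2, h3⟩ := hcon
      apply hne
      have hw0 : w = 0 := by
        by_contra hw
        exact (hA.re_dotProduct_pos hw).ne' h2
      have hxx : x = xs := by rw [← hxdecomp, hw0, add_zero, h1, hxs]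
      rw [hxx, h3]
    have hfin := hmaster.2 t q y hq0 hy' hne'
    rw [hxsq, hxq]
    exact hfin
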